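/- In G_n = P_n □ C_4 with n ≥ 2, R_{G_n}[(a_1,b_1),(a_n,b_1)] < R_{G_n}[(a_1,b_1),(a_n,b_3)]. -/

import Mathlib

open Matrix Finset

open Classical in
/-- The Moore–Penrose pseudoinverse of a real square matrix, defined via the
four Penrose conditions (it is unique when it exists). -/
noncomputable def Matrix.mpinv {m : Type*} [Fintype m] [DecidableEq m]
    (A : Matrix m m ℝ) : Matrix m m ℝ :=
  if h : ∃ B : Matrix m m ℝ,
      A * B * A = A ∧ B * A * B = B ∧ (A * B)ᵀ = A * B ∧ (B * A)ᵀ = B * A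
  then h.choose else 0

/-- Effective resistance between `u` and `v` with respect to a (weighted)
Laplacian matrix `L`:  `(e_u - e_v)ᵀ L⁺ (e_u - e_v)`. -/
noncomputable def effRes {m : Type*} [Fintype m] [DecidableEq m]
    (L : Matrix m m ℝ) (u v : m) : ℝ :=
  (Pi.single u 1 - Pi.single v 1) ⬝ᵥ (L.mpinv *ᵥ (Pi.single u 1 - Pi.single v 1))

/-- The (real) Laplacian matrix of a simple graph. -/
noncomputable def lapm {V : Type*} [Fintype V] [DecidableEq V]
    (G : SimpleGraph V) : Matrix V V ℝ :=
  letI := Classical.decRel G.Adj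
  G.lapMatrix ℝ

/-- Resistance distance between two vertices of a simple graph. -/
noncomputable def resDist {V : Type*} [Fintype V] [DecidableEq V]
    (G : SimpleGraph V) (u v : V) : ℝ :=
  effRes (lapm G) u v

/-- Resistance diameter of a simple graph. -/
noncomputable def resDiam {V : Type*} [Fintype V] [DecidableEq V]
    (G : SimpleGraph V) : ℝ :=
  ⨆ p : V × V, resDist G p.1 p.2

/-- The weighted Laplacian of the cone over `G` with apex `Sum.inr ()`:
edges of `G` have conductance `1` (unit resistance), and each vertex of `G`
is joined to the apex by an edge of conductance `m` (resistance `1/m`). -/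
noncomputable def coneLap {V : Type*} [Fintype V] [DecidableEq V]
    (G : SimpleGraph V) (m : ℝ) : Matrix (V ⊕ Unit) (V ⊕ Unit) ℝ :=
  letI := Classical.decRel G.Adj
  let W : Matrix (V ⊕ Unit) (V ⊕ Unit) ℝ := fun i j =>
    match i, j with
    | Sum.inl a, Sum.inl b => if G.Adj a b then 1 else 0
    | Sum.inl _, Sum.inr _ => m
    | Sum.inr _, Sum.inl _ => m
    | Sum.inr _, Sum.inr _ => 0
  Matrix.of fun i j => (if i = j then ∑ k, W i k else 0) - W i j

/-- The `k`-dimensional hypercube graph `Q_k`. -/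
def hypercube (k : ℕ) : SimpleGraph (Fin k → Bool) where
  Adj x y := (Finset.univ.filter fun i => x i ≠ y i).card = 1
  symm := by
    constructor
    intro x y h
    rw [← h]
    congr 1
    ext i
    simp [ne_comm]
  loopless := by constructor; intro x; simp

/-- The join `G + H` of two graphs on disjoint vertex sets. -/
def graphJoin {V W : Type*} (G : SimpleGraph V) (H : SimpleGraph W) :
    SimpleGraph (V ⊕ W) where
  Adj x y :=
    match x, y with
    | Sum.inl a, Sum.inl b => G.Adj a b
    | Sum.inr a, Sum.inr b => H.Adj a b
    | Sum.inl _, Sum.inr _ => True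
    | Sum.inr _, Sum.inl _ => True
  symm := by
    constructor
    rintro (a | a) (b | b) h
    · exact G.adj_symm h
    · trivial
    · trivial
    · exact H.adj_symm h
  loopless := by
    constructor
    rintro (a | a) h
    · exact G.irrefl h
    · exact H.irrefl h

section MP
variable {m : Type*} [Fintype m] [DecidableEq m]

lemma exists_pinv (A : Matrix m m ℝ) (hA : A.IsHermitian) :
    ∃ B : Matrix m m ℝ,
      A * B * A = A ∧ B * A * B = B ∧ (A * B)ᵀ = A * B ∧ (B * A)ᵀ = B * A := by
  classical
  set U : Matrix m m ℝ := (hA.eigenvectorUnitary : Matrix m m ℝ) with hU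
  have hUU : star U * U = 1 :=
    (Matrix.mem_unitaryGroup_iff').mp hA.eigenvectorUnitary.2
  set e : m → ℝ := hA.eigenvalues with he
  set g : m → ℝ := fun i => if e i = 0 then 0 else (e i)⁻¹ with hg
  have hAeq : A = U * Matrix.diagonal e * star U := by
    have := hA.spectral_theorem
    simpa [hU, he] using this
  have key : ∀ a b : m → ℝ,
      (U * Matrix.diagonal a * star U) * (U * Matrix.diagonal b * star U)
        = U * Matrix.diagonal (a * b) * star U := by
    intro a b
    have hd : Matrix.diagonal a * Matrix.diagonal b = Matrix.diagonal (a * b) := by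
      rw [Matrix.diagonal_mul_diagonal]; rfl
    calc (U * Matrix.diagonal a * star U) * (U * Matrix.diagonal b * star U)
        = U * Matrix.diagonal a * (star U * U) * Matrix.diagonal b * star U := by
          noncomm_ring
      _ = U * (Matrix.diagonal a * Matrix.diagonal b) * star U := by
          rw [hUU]; noncomm_ring
      _ = U * Matrix.diagonal (a * b) * star U := by rw [hd]
  have symm_key : ∀ a : m → ℝ, (U * Matrix.diagonal a * star U)ᵀ
      = U * Matrix.diagonal a * star U := by
    intro a
    rw [← Matrix.conjTranspose_eq_transpose_of_trivial]
    simp [Matrix.conjTranspose_mul, Matrix.star_eq_conjTranspose, Matrix.mul_assoc,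
      Matrix.diagonal_conjTranspose]
  have h_ege : e * g * e = e := by
    funext i
    by_cases h : e i = 0 <;> simp [hg, Pi.mul_apply, h] <;> field_simp
  have h_geg : g * e * g = g := by
    funext i
    by_cases h : e i = 0 <;> simp [hg, Pi.mul_apply, h] <;> field_simp
  refine ⟨U * Matrix.diagonal g * star U, ?_, ?_, ?_, ?_⟩
  · rw [hAeq, key, key, h_ege]
  · rw [hAeq, key, key, h_geg]
  · rw [hAeq, key]; exact symm_key _
  · rw [hAeq, key]; exact symm_key _

lemma effRes_eq_of_solution (L : Matrix m m ℝ) (hL : L.IsHermitian)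
    (u v : m) (y : m → ℝ)
    (hy : L *ᵥ y = Pi.single u 1 - Pi.single v 1) :
    effRes L u v = y u - y v := by
  obtain ⟨B, h1, h2, h3, h4⟩ := exists_pinv L hL
  have hex : ∃ B : Matrix m m ℝ,
      L * B * L = L ∧ B * L * B = B ∧ (L * B)ᵀ = L * B ∧ (B * L)ᵀ = B * L :=
    ⟨B, h1, h2, h3, h4⟩
  have hLt : Lᵀ = L := by
    have := hL.eq
    rwa [Matrix.conjTranspose_eq_transpose_of_trivial] at this
  obtain ⟨hc1, hc2, hc3, hc4⟩ := hex.choose_spec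
  set C := hex.choose with hC
  have : effRes L u v = (L *ᵥ y) ⬝ᵥ (C *ᵥ (L *ᵥ y)) := by
    rw [effRes, Matrix.mpinv, dif_pos hex, hy, ← hC]
  rw [this]
  have step1 : (L *ᵥ y) ⬝ᵥ (C *ᵥ (L *ᵥ y)) = y ⬝ᵥ (Lᵀ *ᵥ (C *ᵥ (L *ᵥ y))) := by
    rw [dotProduct_comm, Matrix.dotProduct_mulVec, ← Matrix.mulVec_transpose,
      dotProduct_comm]
  rw [step1, hLt, Matrix.mulVec_mulVec, Matrix.mulVec_mulVec, hc1, hy]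
  simp [dotProduct_sub, dotProduct_single]

end MP

section Graph
variable {V : Type*} [Fintype V] [DecidableEq V]

open Classical in
lemma lapm_mulVec (G : SimpleGraph V) (f : V → ℝ) (i : V) :
    (lapm G *ᵥ f) i = ∑ j, if G.Adj i j then f i - f j else 0 := by
  classical
  rw [lapm]
  rw [SimpleGraph.lapMatrix_mulVec_apply]
  have hdeg : (G.degree i : ℝ) = ∑ j, if G.Adj i j then (1:ℝ) else 0 := by
    rw [SimpleGraph.degree]
    rw [SimpleGraph.neighborFinset_eq_filter]
    rw [Finset.card_filter]
    push_cast
    simp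
  have hnb : ∑ u ∈ G.neighborFinset i, f u = ∑ j, if G.Adj i j then f j else 0 := by
    rw [SimpleGraph.neighborFinset_eq_filter, Finset.sum_filter]
  rw [hdeg, hnb, Finset.sum_mul, ← Finset.sum_sub_distrib]
  apply Finset.sum_congr rfl
  intro j _
  by_cases h : G.Adj i j <;> simp [h]

open Classical in
lemma lapm_boxProd {W : Type*} [Fintype W] [DecidableEq W]
    (G : SimpleGraph V) (H : SimpleGraph W) (f : V → ℝ) (g : W → ℝ) (p : V × W) :
    (lapm (G.boxProd H) *ᵥ fun q => f q.1 * g q.2) p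
      = (lapm G *ᵥ f) p.1 * g p.2 + f p.1 * (lapm H *ᵥ g) p.2 := by
  classical
  rw [lapm_mulVec, lapm_mulVec, lapm_mulVec]
  rw [Fintype.sum_prod_type]
  have hsplit : ∀ (j : V) (c : W),
      (if (G.boxProd H).Adj p (j, c) then f p.1 * g p.2 - f j * g c else 0)
        = (if G.Adj p.1 j ∧ p.2 = c then f p.1 * g p.2 - f j * g c else 0)
          + (if p.1 = j ∧ H.Adj p.2 c then f p.1 * g p.2 - f j * g c else 0) := by
    intro j c
    have hc : (G.boxProd H).Adj p (j, c)
        ↔ (G.Adj p.1 j ∧ p.2 = c) ∨ (p.1 = j ∧ H.Adj p.2 c) := by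
      rw [SimpleGraph.boxProd_adj]; tauto
    simp only [hc]
    by_cases h1 : G.Adj p.1 j ∧ p.2 = c <;> by_cases h2 : p.1 = j ∧ H.Adj p.2 c
    · exact absurd h1.1 (by rw [h2.1]; exact G.irrefl)
    · rw [if_pos (Or.inl h1), if_pos h1, if_neg h2, add_zero]
    · rw [if_pos (Or.inr h2), if_neg h1, if_pos h2, zero_add]
    · rw [if_neg (by tauto), if_neg h1, if_neg h2, add_zero]
  simp_rw [hsplit, Finset.sum_add_distrib]
  congr 1
  · -- first: sum over j of inner-sum over c collapses at c = p.2
    have : ∀ j : V, (∑ c, if G.Adj p.1 j ∧ p.2 = c then f p.1 * g p.2 - f j * g c else 0)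
        = if G.Adj p.1 j then (f p.1 - f j) * g p.2 else 0 := by
      intro j
      by_cases h : G.Adj p.1 j
      · simp only [h, true_and]
        rw [Finset.sum_ite_eq (Finset.univ : Finset W) p.2
          (fun c => f p.1 * g p.2 - f j * g c)]
        simp [sub_mul]
      · simp [h]
    simp_rw [this]
    rw [Finset.sum_mul]
    apply Finset.sum_congr rfl
    intro j _
    by_cases h : G.Adj p.1 j <;> simp [h]
  · -- second: sum over j collapses at j = p.1
    have hin : ∀ j : V, (∑ c, if p.1 = j ∧ H.Adj p.2 c then f p.1 * g p.2 - f j * g c else 0)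
        = if p.1 = j then ∑ c, (if H.Adj p.2 c then f p.1 * g p.2 - f j * g c else 0) else 0 := by
      intro j
      by_cases h : p.1 = j
      · simp [h]
      · simp [h]
    simp_rw [hin]
    rw [Finset.sum_ite_eq (Finset.univ : Finset V) p.1]
    simp only [Finset.mem_univ, if_true]
    rw [Finset.mul_sum]
    apply Finset.sum_congr rfl
    intro c _
    by_cases h : H.Adj p.2 c <;> simp [h, mul_sub]

end Graph

lemma sum_ite_fin (n : ℕ) (m : ℕ) (t : ℕ → ℝ) :
    (∑ j : Fin n, if j.val = m then t j.val else 0) = if m < n then t m else 0 := by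
  split_ifs with h
  · rw [Finset.sum_eq_single (⟨m, h⟩ : Fin n)]
    · rw [if_pos rfl]
    · intro j _ hj
      exact if_neg (fun hc => hj (Fin.ext hc))
    · intro hb; exact absurd (Finset.mem_univ _) hb
  · apply Finset.sum_eq_zero
    intro j _
    refine if_neg (fun hc => h ?_)
    have := j.isLt
    omega

open Classical in
lemma lapm_path (n : ℕ) (F : ℕ → ℝ) (i : Fin n) :
    (lapm (SimpleGraph.pathGraph n) *ᵥ fun j => F j.val) i
      = (if i.val = n - 1 then 0 else F i.val - F (i.val + 1))
        + (if i.val = 0 then 0 else F i.val - F (i.val - 1)) := by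
  rw [lapm_mulVec]
  have hterm : ∀ j : Fin n,
      (if (SimpleGraph.pathGraph n).Adj i j then F i.val - F j.val else 0)
      = (if j.val = i.val + 1 then F i.val - F j.val else 0)
        + (if i.val ≠ 0 ∧ j.val = i.val - 1 then F i.val - F j.val else 0) := by
    intro j
    have hadj : (SimpleGraph.pathGraph n).Adj i j
        ↔ (j.val = i.val + 1 ∨ (i.val ≠ 0 ∧ j.val = i.val - 1)) := by
      rw [SimpleGraph.pathGraph_adj]; omega
    simp only [hadj]
    by_cases h1 : j.val = i.val + 1 <;> by_cases h2 : i.val ≠ 0 ∧ j.val = i.val - 1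
    · omega
    · rw [if_pos (Or.inl h1), if_pos h1, if_neg h2, add_zero]
    · rw [if_pos (Or.inr h2), if_neg h1, if_pos h2, zero_add]
    · rw [if_neg (by tauto), if_neg h1, if_neg h2, add_zero]
  simp_rw [hterm]
  rw [Finset.sum_add_distrib]
  congr 1
  · rw [sum_ite_fin n (i.val + 1) (fun m => F i.val - F m)]
    have hi := i.isLt
    split_ifs with h1 h2 h2 <;> first | rfl | omega
  · by_cases h0 : i.val = 0
    · rw [if_pos h0]
      apply Finset.sum_eq_zero
      intro j _
      exact if_neg (fun hc => hc.1 h0)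
    · rw [if_neg h0]
      have : ∀ j : Fin n, (if i.val ≠ 0 ∧ j.val = i.val - 1 then F i.val - F j.val else 0)
          = (if j.val = i.val - 1 then F i.val - F j.val else 0) := by
        intro j
        by_cases h : j.val = i.val - 1
        · rw [if_pos ⟨h0, h⟩, if_pos h]
        · rw [if_neg (fun hc => h hc.2), if_neg h]
      simp_rw [this]
      rw [sum_ite_fin n (i.val - 1) (fun m => F i.val - F m)]
      have hi := i.isLt
      rw [if_pos (by omega)]

noncomputable def vv : ℕ → ℝ
  | 0 => 1
  | 1 => 3
  | (k+2) => 4 * vv (k+1) - vv k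

noncomputable def ww : ℕ → ℝ
  | 0 => 1
  | 1 => 5
  | (k+2) => 6 * ww (k+1) - ww k

lemma vv_pos_mono (k : ℕ) : 0 < vv k ∧ vv k < vv (k+1) := by
  induction k with
  | zero => norm_num [vv]
  | succ k ih =>
    obtain ⟨h1, h2⟩ := ih
    constructor
    · linarith
    · rw [show k + 1 + 1 = k + 2 from rfl, vv]
      linarith

lemma ww_pos_mono (k : ℕ) : 0 < ww k ∧ ww k < ww (k+1) := by
  induction k with
  | zero => norm_num [ww]
  | succ k ih =>
    obtain ⟨h1, h2⟩ := ih
    constructor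
    · linarith
    · rw [show k + 1 + 1 = k + 2 from rfl, ww]
      linarith

noncomputable def W2r (n : ℕ) : ℝ := 3 * vv (n-1) - vv (n-2)
noncomputable def W4r (n : ℕ) : ℝ := 5 * ww (n-1) - ww (n-2)
noncomputable def FF0 (n : ℕ) : ℕ → ℝ := fun i => (n : ℝ) - 1 - i
noncomputable def YY2 (n : ℕ) : ℕ → ℝ := fun i => (vv (n-1-i) - vv i) / W2r n
noncomputable def ZZ2 (n : ℕ) : ℕ → ℝ := fun i => (vv (n-1-i) + vv i) / W2r n
noncomputable def YY4 (n : ℕ) : ℕ → ℝ := fun i => (ww (n-1-i) - ww i) / W4r n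

lemma W2r_pos (n : ℕ) (hn : 2 ≤ n) : 0 < W2r n := by
  have h1 := (vv_pos_mono (n-2)).1
  have h2 := (vv_pos_mono (n-2)).2
  rw [show n - 2 + 1 = n - 1 by omega] at h2
  rw [W2r]
  linarith

lemma W4r_pos (n : ℕ) (hn : 2 ≤ n) : 0 < W4r n := by
  have h1 := (ww_pos_mono (n-2)).1
  have h2 := (ww_pos_mono (n-2)).2
  rw [show n - 2 + 1 = n - 1 by omega] at h2
  rw [W4r]
  linarith

lemma vv_rec (k : ℕ) : vv (k+2) = 4 * vv (k+1) - vv k := by simp [vv]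
lemma ww_rec (k : ℕ) : ww (k+2) = 6 * ww (k+1) - ww k := by simp [ww]
lemma vv_zero : vv 0 = 1 := rfl
lemma vv_one : vv 1 = 3 := rfl
lemma ww_zero : ww 0 = 1 := rfl
lemma ww_one : ww 1 = 5 := rfl

lemma path_FF0 (n : ℕ) (hn : 2 ≤ n) (i : Fin n) :
    (lapm (SimpleGraph.pathGraph n) *ᵥ fun j => FF0 n j.val) i
      = (if i.val = 0 then 1 else 0) - (if i.val = n - 1 then 1 else 0) := by
  rw [lapm_path]
  rcases i with ⟨a, ha⟩
  simp only [Fin.val_mk]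
  by_cases h0 : a = 0
  · subst h0
    rw [if_neg (by omega), if_pos rfl, if_pos rfl, if_neg (by omega)]
    norm_num [FF0]
  · by_cases h1 : a = n - 1
    · subst h1
      rw [if_pos rfl, if_neg h0, if_neg h0, if_pos rfl]
      rw [show n - 1 - 1 = n - 2 by omega]
      rw [FF0, FF0]
      rw [Nat.cast_sub (by omega), Nat.cast_sub (by omega)]
      push_cast
      ring
    · obtain ⟨b, rfl⟩ : ∃ b, a = b + 1 := ⟨a - 1, by omega⟩
      rw [if_neg h1, if_neg h0, if_neg h0, if_neg h1]
      rw [show b + 1 - 1 = b by omega]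
      simp only [FF0]
      push_cast
      ring

lemma path_YY2 (n : ℕ) (hn : 2 ≤ n) (i : Fin n) :
    (lapm (SimpleGraph.pathGraph n) *ᵥ fun j => YY2 n j.val) i
      = ((if i.val = 0 then 1 else 0) - (if i.val = n - 1 then 1 else 0))
        - 2 * YY2 n i.val := by
  have hW := W2r_pos n hn
  have hWne : W2r n ≠ 0 := ne_of_gt hW
  rw [lapm_path]
  rcases i with ⟨a, ha⟩
  simp only [Fin.val_mk]
  by_cases h0 : a = 0
  · subst h0
    rw [if_neg (by omega), if_pos rfl, if_pos rfl, if_neg (by omega)]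
    simp only [YY2]
    rw [show n - 1 - 0 = n - 1 by omega, show n - 1 - 1 = n - 2 by omega]
    rw [vv_zero, vv_one]
    have hW2 : W2r n = 3 * vv (n-1) - vv (n-2) := rfl
    field_simp
    linarith
  · by_cases h1 : a = n - 1
    · subst h1
      rw [if_pos rfl, if_neg h0, if_neg h0, if_pos rfl]
      simp only [YY2]
      rw [show n - 1 - 1 = n - 2 by omega, show n - 1 - (n-1) = 0 by omega,
        show n - 1 - (n-2) = 1 by omega]
      rw [vv_zero, vv_one]
      have hW2 : W2r n = 3 * vv (n-1) - vv (n-2) := rfl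
      field_simp
      linarith
    · obtain ⟨b, rfl⟩ : ∃ b, a = b + 1 := ⟨a - 1, by omega⟩
      rw [if_neg h1, if_neg h0, if_neg h0, if_neg h1]
      rw [show b + 1 - 1 = b by omega]
      simp only [YY2]
      obtain ⟨c, hc⟩ : ∃ c, n - 1 - (b + 1 + 1) = c := ⟨_, rfl⟩
      rw [show n - 1 - (b+1) = c + 1 by omega, show n - 1 - b = c + 2 by omega, hc]
      have hr1 := vv_rec b
      have hr2 := vv_rec c
      field_simp
      linarith

lemma path_ZZ2 (n : ℕ) (hn : 2 ≤ n) (i : Fin n) :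
    (lapm (SimpleGraph.pathGraph n) *ᵥ fun j => ZZ2 n j.val) i
      = ((if i.val = 0 then 1 else 0) + (if i.val = n - 1 then 1 else 0))
        - 2 * ZZ2 n i.val := by
  have hW := W2r_pos n hn
  have hWne : W2r n ≠ 0 := ne_of_gt hW
  rw [lapm_path]
  rcases i with ⟨a, ha⟩
  simp only [Fin.val_mk]
  by_cases h0 : a = 0
  · subst h0
    rw [if_neg (by omega), if_pos rfl, if_pos rfl, if_neg (by omega)]
    simp only [ZZ2]
    rw [show n - 1 - 0 = n - 1 by omega, show n - 1 - 1 = n - 2 by omega]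
    rw [vv_zero, vv_one]
    have hW2 : W2r n = 3 * vv (n-1) - vv (n-2) := rfl
    field_simp
    linarith
  · by_cases h1 : a = n - 1
    · subst h1
      rw [if_pos rfl, if_neg h0, if_neg h0, if_pos rfl]
      simp only [ZZ2]
      rw [show n - 1 - 1 = n - 2 by omega, show n - 1 - (n-1) = 0 by omega,
        show n - 1 - (n-2) = 1 by omega]
      rw [vv_zero, vv_one]
      have hW2 : W2r n = 3 * vv (n-1) - vv (n-2) := rfl
      field_simp
      linarith
    · obtain ⟨b, rfl⟩ : ∃ b, a = b + 1 := ⟨a - 1, by omega⟩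
      rw [if_neg h1, if_neg h0, if_neg h0, if_neg h1]
      rw [show b + 1 - 1 = b by omega]
      simp only [ZZ2]
      obtain ⟨c, hc⟩ : ∃ c, n - 1 - (b + 1 + 1) = c := ⟨_, rfl⟩
      rw [show n - 1 - (b+1) = c + 1 by omega, show n - 1 - b = c + 2 by omega, hc]
      have hr1 := vv_rec b
      have hr2 := vv_rec c
      field_simp
      linarith

lemma path_YY4 (n : ℕ) (hn : 2 ≤ n) (i : Fin n) :
    (lapm (SimpleGraph.pathGraph n) *ᵥ fun j => YY4 n j.val) i
      = ((if i.val = 0 then 1 else 0) - (if i.val = n - 1 then 1 else 0))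
        - 4 * YY4 n i.val := by
  have hW := W4r_pos n hn
  have hWne : W4r n ≠ 0 := ne_of_gt hW
  rw [lapm_path]
  rcases i with ⟨a, ha⟩
  simp only [Fin.val_mk]
  by_cases h0 : a = 0
  · subst h0
    rw [if_neg (by omega), if_pos rfl, if_pos rfl, if_neg (by omega)]
    simp only [YY4]
    rw [show n - 1 - 0 = n - 1 by omega, show n - 1 - 1 = n - 2 by omega]
    rw [ww_zero, ww_one]
    have hW2 : W4r n = 5 * ww (n-1) - ww (n-2) := rfl
    field_simp
    linarith
  · by_cases h1 : a = n - 1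
    · subst h1
      rw [if_pos rfl, if_neg h0, if_neg h0, if_pos rfl]
      simp only [YY4]
      rw [show n - 1 - 1 = n - 2 by omega, show n - 1 - (n-1) = 0 by omega,
        show n - 1 - (n-2) = 1 by omega]
      rw [ww_zero, ww_one]
      have hW2 : W4r n = 5 * ww (n-1) - ww (n-2) := rfl
      field_simp
      linarith
    · obtain ⟨b, rfl⟩ : ∃ b, a = b + 1 := ⟨a - 1, by omega⟩
      rw [if_neg h1, if_neg h0, if_neg h0, if_neg h1]
      rw [show b + 1 - 1 = b by omega]
      simp only [YY4]
      obtain ⟨c, hc⟩ : ∃ c, n - 1 - (b + 1 + 1) = c := ⟨_, rfl⟩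
      rw [show n - 1 - (b+1) = c + 1 by omega, show n - 1 - b = c + 2 by omega, hc]
      have hr1 := ww_rec b
      have hr2 := ww_rec c
      field_simp
      linarith

noncomputable def cc0 : Fin 4 → ℝ := fun _ => 1/4
noncomputable def cc2 : Fin 4 → ℝ := fun b => if b.val = 0 then 1/2 else if b.val = 2 then -1/2 else 0
noncomputable def cc4 : Fin 4 → ℝ := fun b => if b.val % 2 = 0 then 1/4 else -1/4

lemma cyc_adj : ∀ x y : Fin 4, (SimpleGraph.cycleGraph 4).Adj x y
    ↔ (x.val = (y.val + 1) % 4 ∨ y.val = (x.val + 1) % 4) := by decide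

lemma cyc_cc0 (b : Fin 4) : (lapm (SimpleGraph.cycleGraph 4) *ᵥ cc0) b = 0 := by
  rw [lapm_mulVec]
  apply Finset.sum_eq_zero
  intro j _
  simp [cc0]

lemma cyc_cc2 (b : Fin 4) : (lapm (SimpleGraph.cycleGraph 4) *ᵥ cc2) b = 2 * cc2 b := by
  rw [lapm_mulVec, Fin.sum_univ_four]
  simp only [cyc_adj]
  fin_cases b <;>
    norm_num [cc2, show ((0:Fin 4):ℕ) = 0 from rfl, show ((1:Fin 4):ℕ) = 1 from rfl,
      show ((2:Fin 4):ℕ) = 2 from rfl, show ((3:Fin 4):ℕ) = 3 from rfl]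

lemma cyc_cc4 (b : Fin 4) : (lapm (SimpleGraph.cycleGraph 4) *ᵥ cc4) b = 4 * cc4 b := by
  rw [lapm_mulVec, Fin.sum_univ_four]
  simp only [cyc_adj]
  fin_cases b <;>
    norm_num [cc4, show ((0:Fin 4):ℕ) = 0 from rfl, show ((1:Fin 4):ℕ) = 1 from rfl,
      show ((2:Fin 4):ℕ) = 2 from rfl, show ((3:Fin 4):ℕ) = 3 from rfl]

set_option maxHeartbeats 2000000 in
/-- In `G_n = P_n □ C_4`, `R[(a₁,b₁),(aₙ,b₁)] < R[(a₁,b₁),(aₙ,b₃)]`. -/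
theorem resDist_blockTower_straight_lt_diag (n : ℕ) (hn : 2 ≤ n) :
    resDist ((SimpleGraph.pathGraph n).boxProd (SimpleGraph.cycleGraph 4))
        (⟨0, by omega⟩, 0) (⟨n - 1, by omega⟩, 0)
      < resDist ((SimpleGraph.pathGraph n).boxProd (SimpleGraph.cycleGraph 4))
          (⟨0, by omega⟩, 0) (⟨n - 1, by omega⟩, 2) := by
  have hL : (lapm ((SimpleGraph.pathGraph n).boxProd (SimpleGraph.cycleGraph 4))).IsHermitian := by
    letI := Classical.decRel ((SimpleGraph.pathGraph n).boxProd (SimpleGraph.cycleGraph 4)).Adj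
    unfold lapm
    exact (SimpleGraph.posSemidef_lapMatrix ℝ _).1
  have hu0 : ((⟨0, by omega⟩ : Fin n) : ℕ) = 0 := rfl
  have hv0 : ((⟨n - 1, by omega⟩ : Fin n) : ℕ) = n - 1 := rfl
  have h1 : lapm ((SimpleGraph.pathGraph n).boxProd (SimpleGraph.cycleGraph 4)) *ᵥ
      ((fun q : Fin n × Fin 4 => FF0 n q.1.val * cc0 q.2)
        + ((fun q : Fin n × Fin 4 => YY2 n q.1.val * cc2 q.2)
          + (fun q : Fin n × Fin 4 => YY4 n q.1.val * cc4 q.2)))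
      = Pi.single ((⟨0, by omega⟩, 0) : Fin n × Fin 4) 1
        - Pi.single ((⟨n - 1, by omega⟩, 0) : Fin n × Fin 4) 1 := by
    funext p
    obtain ⟨i, b⟩ := p
    rw [Matrix.mulVec_add, Matrix.mulVec_add]
    simp only [Pi.add_apply]
    rw [lapm_boxProd (SimpleGraph.pathGraph n) (SimpleGraph.cycleGraph 4)
        (fun a : Fin n => FF0 n a.val) cc0 (i, b),
      lapm_boxProd (SimpleGraph.pathGraph n) (SimpleGraph.cycleGraph 4)
        (fun a : Fin n => YY2 n a.val) cc2 (i, b),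
      lapm_boxProd (SimpleGraph.pathGraph n) (SimpleGraph.cycleGraph 4)
        (fun a : Fin n => YY4 n a.val) cc4 (i, b),
      path_FF0 n hn, path_YY2 n hn, path_YY4 n hn, cyc_cc0, cyc_cc2, cyc_cc4]
    simp only [Pi.sub_apply, Pi.single_apply, Prod.mk.injEq, Fin.ext_iff, Fin.val_mk, hu0, hv0]
    fin_cases b <;>
      simp only [cc0, cc2, cc4, show ((0:Fin 4):ℕ) = 0 from rfl, show ((1:Fin 4):ℕ) = 1 from rfl,
        show ((2:Fin 4):ℕ) = 2 from rfl, show ((3:Fin 4):ℕ) = 3 from rfl] <;>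
      norm_num <;>
      by_cases h0 : (i : ℕ) = 0 <;> by_cases h1 : (i : ℕ) = n - 1 <;>
      simp [h0, h1] <;> first | omega | ring
  have h3 : lapm ((SimpleGraph.pathGraph n).boxProd (SimpleGraph.cycleGraph 4)) *ᵥ
      ((fun q : Fin n × Fin 4 => FF0 n q.1.val * cc0 q.2)
        + ((fun q : Fin n × Fin 4 => ZZ2 n q.1.val * cc2 q.2)
          + (fun q : Fin n × Fin 4 => YY4 n q.1.val * cc4 q.2)))
      = Pi.single ((⟨0, by omega⟩, 0) : Fin n × Fin 4) 1
        - Pi.single ((⟨n - 1, by omega⟩, 2) : Fin n × Fin 4) 1 := by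
    funext p
    obtain ⟨i, b⟩ := p
    rw [Matrix.mulVec_add, Matrix.mulVec_add]
    simp only [Pi.add_apply]
    rw [lapm_boxProd (SimpleGraph.pathGraph n) (SimpleGraph.cycleGraph 4)
        (fun a : Fin n => FF0 n a.val) cc0 (i, b),
      lapm_boxProd (SimpleGraph.pathGraph n) (SimpleGraph.cycleGraph 4)
        (fun a : Fin n => ZZ2 n a.val) cc2 (i, b),
      lapm_boxProd (SimpleGraph.pathGraph n) (SimpleGraph.cycleGraph 4)
        (fun a : Fin n => YY4 n a.val) cc4 (i, b),
      path_FF0 n hn, path_ZZ2 n hn, path_YY4 n hn, cyc_cc0, cyc_cc2, cyc_cc4]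
    simp only [Pi.sub_apply, Pi.single_apply, Prod.mk.injEq, Fin.ext_iff, Fin.val_mk, hu0, hv0]
    fin_cases b <;>
      simp only [cc0, cc2, cc4, show ((0:Fin 4):ℕ) = 0 from rfl, show ((1:Fin 4):ℕ) = 1 from rfl,
        show ((2:Fin 4):ℕ) = 2 from rfl, show ((3:Fin 4):ℕ) = 3 from rfl] <;>
      norm_num <;>
      by_cases h0 : (i : ℕ) = 0 <;> by_cases h1 : (i : ℕ) = n - 1 <;>
      simp [h0, h1] <;> first | omega | ring
  rw [resDist, resDist,
    effRes_eq_of_solution _ hL _ _ _ h1,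
    effRes_eq_of_solution _ hL _ _ _ h3]
  simp only [Pi.add_apply, hu0, hv0]
  have hW := W2r_pos n hn
  have key : YY2 n 0 - YY2 n (n-1) < ZZ2 n 0 + ZZ2 n (n-1) := by
    simp only [YY2, ZZ2]
    rw [show n - 1 - 0 = n - 1 by omega, show n - 1 - (n-1) = 0 by omega,
      show vv 0 = 1 from rfl]
    rw [div_sub_div_same, ← add_div, div_lt_div_iff_of_pos_right hW]
    linarith
  simp only [cc0, cc2, cc4, show ((0:Fin 4):ℕ) = 0 from rfl, show ((2:Fin 4):ℕ) = 2 from rfl]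
  norm_num
  linarith [key]
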